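/- arXiv:0909.0726 — 12 statements merged into one kernel-verified Lean document; each statement's English description precedes it below -/
import Mathlib

section
/- Let (A, μ) be a Novikov algebra (a left-symmetric algebra satisfying (xy)z = (xz)y) over a field of characteristic 0, and let α: A → A be an algebra morphism (α∘μ = μ∘(α⊗α)). Define μ_α = α∘μ. Then (A, μ_α, α) is a Hom-Novikov algebra, i.e., α is multiplicative with respect to μ_α, and for all x,y,z: μ_α(μ_α(x,y),α(z)) − μ_α(α(x),μ_α(y,z)) = μ_α(μ_α(y,x),α(z)) − μ_α(α(y),μ_α(x,z)), and μ_α(μ_α(x,y),α(z)) = μ_α(μ_α(x,z),α(y)). -/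
/-- Hom-Novikov deformation of a Novikov algebra along an algebra morphism. -/
theorem novikov_twist_is_hom_novikov
    {K A : Type*} [Field K] [CharZero K] [AddCommGroup A] [Module K A]
    (μ : A →ₗ[K] A →ₗ[K] A)
    (hls : ∀ x y z : A, μ (μ x y) z - μ x (μ y z) = μ (μ y x) z - μ y (μ x z))
    (hnov : ∀ x y z : A, μ (μ x y) z = μ (μ x z) y)
    (α : A →ₗ[K] A) (hα : ∀ x y : A, α (μ x y) = μ (α x) (α y))
    (μα : A → A → A) (hμα : ∀ x y : A, μα x y = α (μ x y)) :
    (∀ x y : A, α (μα x y) = μα (α x) (α y)) ∧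
    (∀ x y z : A,
      μα (μα x y) (α z) - μα (α x) (μα y z) =
      μα (μα y x) (α z) - μα (α y) (μα x z)) ∧
    (∀ x y z : A, μα (μα x y) (α z) = μα (μα x z) (α y)) := by
  refine ⟨fun x y => by simp only [hμα, hα], fun x y z => ?_, fun x y z => ?_⟩
  · simp only [hμα, hα, ← map_sub, ← LinearMap.map_sub, ← LinearMap.sub_apply]
    rw [hls]
  · simp only [hμα, hα]
    rw [hnov]
end

section
/- Let (A, μ, α) be a Hom-commutative algebra (a Hom-associative algebra with commutative multiplication) and D: A → A a derivation (D(xy) = D(x)y + xD(y)) with Dα = αD. Define x * y = xD(y). Then (A, *, α) is a Hom-Novikov algebra. -/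
theorem hom_commutative_derivation_gives_hom_novikov
    {K A : Type*} [Field K] [AddCommGroup A] [Module K A]
    (μ : A →ₗ[K] A →ₗ[K] A) (α : A →ₗ[K] A)
    (hmul : ∀ x y : A, α (μ x y) = μ (α x) (α y))
    (hassoc : ∀ x y z : A, μ (μ x y) (α z) = μ (α x) (μ y z))
    (hcomm : ∀ x y : A, μ x y = μ y x)
    (D : A →ₗ[K] A)
    (hD : ∀ x y : A, D (μ x y) = μ (D x) y + μ x (D y))
    (hDα : ∀ x : A, D (α x) = α (D x))
    (s : A → A → A) (hs : ∀ x y : A, s x y = μ x (D y)) :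
    (∀ x y : A, α (s x y) = s (α x) (α y)) ∧
    (∀ x y z : A,
      s (s x y) (α z) - s (α x) (s y z) =
      s (s y x) (α z) - s (α y) (s x z)) ∧
    (∀ x y z : A, s (s x y) (α z) = s (s x z) (α y)) := by
  have key : ∀ x y w : A, μ (α x) (μ y w) = μ (α y) (μ x w) := by
    intro x y w
    calc μ (α x) (μ y w) = μ (μ w y) (α x) := by rw [hcomm, hcomm y w]
      _ = μ (α w) (μ y x) := hassoc w y x
      _ = μ (α w) (μ x y) := by rw [hcomm y x]
      _ = μ (μ w x) (α y) := (hassoc w x y).symm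
      _ = μ (α y) (μ x w) := by rw [hcomm, hcomm w x]
  have main : ∀ x y z : A, s (s x y) (α z) = μ (α x) (μ (D y) (D z)) := by
    intro x y z
    rw [hs, hs, hDα, hassoc]
  refine ⟨fun x y => by rw [hs, hs, hmul, hDα], ?_, ?_⟩
  · intro x y z
    rw [main, main, hs (α x), hs (α y), hs y z, hs x z, hD, hD, map_add, map_add]
    have h1 := key x y (D (D z))
    abel_nf
    rw [h1]
  · intro x y z
    rw [main, main, hcomm (D y) (D z)]
end

section
/- Let (A, μ, α) be a Hom-commutative algebra and D a derivation with Dα = αD. Then for all x,y,z ∈ A: (x*y)*α(z) − α(x)*(y*z) = −(xy)α(D²(z)), where x*y = xD(y). -/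
theorem hom_left_symmetry_defect
    {K A : Type*} [Field K] [AddCommGroup A] [Module K A]
    (μ : A →ₗ[K] A →ₗ[K] A) (α : A →ₗ[K] A)
    (hmul : ∀ x y : A, α (μ x y) = μ (α x) (α y))
    (hassoc : ∀ x y z : A, μ (μ x y) (α z) = μ (α x) (μ y z))
    (hcomm : ∀ x y : A, μ x y = μ y x)
    (D : A →ₗ[K] A)
    (hD : ∀ x y : A, D (μ x y) = μ (D x) y + μ x (D y))
    (hDα : ∀ x : A, D (α x) = α (D x))
    (s : A → A → A) (hs : ∀ x y : A, s x y = μ x (D y)) :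
    ∀ x y z : A,
      s (s x y) (α z) - s (α x) (s y z) = - μ (μ x y) (α (D (D z))) := by
  intro x y z
  rw [hs, hs, hs, hs, hDα, hassoc, hD, hassoc x y (D (D z)), map_add]
  abel
end

section
/- Let (A, μ, α) be a Hom-commutative algebra and D a derivation with Dα = αD. Then (x*y)*α(z) = α(x)(D(y)D(z)) for all x,y,z, where x*y = xD(y); in particular (x*y)*α(z) = (x*z)*α(y). -/
theorem hom_novikov_second_axiom_for_star
    {K A : Type*} [Field K] [AddCommGroup A] [Module K A]
    (μ : A →ₗ[K] A →ₗ[K] A) (α : A →ₗ[K] A)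
    (hmul : ∀ x y : A, α (μ x y) = μ (α x) (α y))
    (hassoc : ∀ x y z : A, μ (μ x y) (α z) = μ (α x) (μ y z))
    (hcomm : ∀ x y : A, μ x y = μ y x)
    (D : A →ₗ[K] A)
    (hD : ∀ x y : A, D (μ x y) = μ (D x) y + μ x (D y))
    (hDα : ∀ x : A, D (α x) = α (D x))
    (s : A → A → A) (hs : ∀ x y : A, s x y = μ x (D y)) :
    ∀ x y z : A,
      s (s x y) (α z) = μ (α x) (μ (D y) (D z)) ∧
      s (s x y) (α z) = s (s x z) (α y) := by
  intro x y z
  have key : ∀ u v : A, s (s x u) (α v) = μ (α x) (μ (D u) (D v)) := by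
    intro u v
    rw [hs, hs, hDα, hassoc]
  exact ⟨key y z, by rw [key, key, hcomm (D y)]⟩
end

section
/- Let (A, μ) be an associative and commutative algebra, α: A → A an algebra morphism, and D: A → A a derivation with Dα = αD. Define x * y = α(xD(y)). Then (A, *, α) is a Hom-Novikov algebra. -/
theorem comm_assoc_twisted_derivation_hom_novikov
    {K A : Type*} [Field K] [CharZero K] [CommRing A] [Algebra K A]
    (α : A →ₗ[K] A) (hα : ∀ x y : A, α (x * y) = α x * α y)
    (D : A →ₗ[K] A) (hD : ∀ x y : A, D (x * y) = D x * y + x * D y)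
    (hDα : ∀ x : A, D (α x) = α (D x))
    (s : A → A → A) (hs : ∀ x y : A, s x y = α (x * D y)) :
    (∀ x y : A, α (s x y) = s (α x) (α y)) ∧
    (∀ x y z : A,
      s (s x y) (α z) - s (α x) (s y z) =
      s (s y x) (α z) - s (α y) (s x z)) ∧
    (∀ x y z : A, s (s x y) (α z) = s (s x z) (α y)) := by
  refine ⟨fun x y => ?_, fun x y z => ?_, fun x y z => ?_⟩
  · rw [hs, hs, hα, hDα, hα]
  · simp only [hs, hα, hDα, hD, map_add, mul_add]
    ring_nf
  · simp only [hs, hα, hDα]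
    ring
end

section
/- Let (L, [−,−], α) be a Hom-Lie algebra and f: L → L linear with fα = αf. Define x ⋆ y = [f(x), y]. Then (L, ⋆, α) is a Hom-Novikov algebra if and only if for all x,y,z ∈ L: f([f(x),y] + [x,f(y)]) − [f(x),f(y)] ∈ Z(α(L)) and [f([f(x),y]), α(z)] = [f([f(x),z]), α(y)], where Z(α(L)) = {w ∈ L : [w, α(u)] = 0 for all u ∈ L}. -/
theorem hom_lie_star_hom_novikov_iff
    {K L : Type*} [Field K] [AddCommGroup L] [Module K L]
    (B : L →ₗ[K] L →ₗ[K] L)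
    (hskew : ∀ x y : L, B x y = - B y x)
    (α : L →ₗ[K] L) (hα : ∀ x y : L, α (B x y) = B (α x) (α y))
    (hjac : ∀ x y z : L, B (B x y) (α z) + B (B z x) (α y) + B (B y z) (α x) = 0)
    (f : L →ₗ[K] L) (hfα : ∀ x : L, f (α x) = α (f x))
    (s : L → L → L) (hs : ∀ x y : L, s x y = B (f x) y) :
    ((∀ x y : L, α (s x y) = s (α x) (α y)) ∧
     (∀ x y z : L,
       s (s x y) (α z) - s (α x) (s y z) =
       s (s y x) (α z) - s (α y) (s x z)) ∧
     (∀ x y z : L, s (s x y) (α z) = s (s x z) (α y))) ↔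
    ((∀ x y u : L, B (f (B (f x) y + B x (f y)) - B (f x) (f y)) (α u) = 0) ∧
     (∀ x y z : L, B (f (B (f x) y)) (α z) = B (f (B (f x) z)) (α y))) := by
  -- auxiliary consequence of skew-symmetry and Hom-Jacobi
  have h1 : ∀ a b z : L, B (α a) (B b z) - B (α b) (B a z) = B (B a b) (α z) := by
    intro a b z
    have hj := hjac a b z
    have e3 : B (B z a) (α b) = - B (B a z) (α b) := by
      rw [hskew z a]; simp
    rw [e3] at hj
    rw [hskew (α a) (B b z), hskew (α b) (B a z), ← sub_eq_zero, ← neg_eq_zero, ← hj]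
    abel
  -- key identity
  have key : ∀ x y z : L,
      (s (s x y) (α z) - s (α x) (s y z)) - (s (s y x) (α z) - s (α y) (s x z))
        = B (f (B (f x) y + B x (f y)) - B (f x) (f y)) (α z) := by
    intro x y z
    simp only [hs, hfα]
    rw [hskew x (f y)]
    simp only [map_add, map_sub, map_neg, LinearMap.add_apply, LinearMap.sub_apply,
      LinearMap.neg_apply]
    rw [← h1 (f x) (f y) z]
    abel
  have hmul : ∀ x y : L, α (s x y) = s (α x) (α y) := by
    intro x y
    simp [hs, hα, hfα]
  constructor
  · rintro ⟨-, h2, h3⟩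
    refine ⟨fun x y u => ?_, fun x y z => ?_⟩
    · rw [← key x y u, h2 x y u, sub_self]
    · have := h3 x y z
      simpa [hs] using this
  · rintro ⟨h1', h2'⟩
    refine ⟨hmul, fun x y z => ?_, fun x y z => ?_⟩
    · have hk := key x y z
      rw [h1' x y z] at hk
      exact sub_eq_zero.mp hk
    · simp only [hs]
      exact h2' x y z
end

section
/- Let (L, [−,−], α) be a Hom-Lie algebra and f: L → L linear with fα = αf. Define x ⋆′ y = [x, f(y)]. Then (L, ⋆′, α) is a Hom-Novikov algebra if and only if for all x,y,z ∈ L: [[x,f(y)] + [f(x),y], f(α(z))] − [α(x), f([y,f(z)])] + [α(y), f([x,f(z)])] = 0 and [f(x), f(y)] ∈ Z(α(L)), where Z(α(L)) = {w ∈ L : [w, α(u)] = 0 for all u ∈ L}. -/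
theorem hom_lie_star_prime_hom_novikov_iff
    {K L : Type*} [Field K] [AddCommGroup L] [Module K L]
    (B : L →ₗ[K] L →ₗ[K] L)
    (hskew : ∀ x y : L, B x y = - B y x)
    (α : L →ₗ[K] L) (hα : ∀ x y : L, α (B x y) = B (α x) (α y))
    (hjac : ∀ x y z : L, B (B x y) (α z) + B (B z x) (α y) + B (B y z) (α x) = 0)
    (f : L →ₗ[K] L) (hfα : ∀ x : L, f (α x) = α (f x))
    (s : L → L → L) (hs : ∀ x y : L, s x y = B x (f y)) :
    ((∀ x y : L, α (s x y) = s (α x) (α y)) ∧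
     (∀ x y z : L,
       s (s x y) (α z) - s (α x) (s y z) =
       s (s y x) (α z) - s (α y) (s x z)) ∧
     (∀ x y z : L, s (s x y) (α z) = s (s x z) (α y))) ↔
    ((∀ x y z : L,
       B (B x (f y) + B (f x) y) (f (α z)) - B (α x) (f (B y (f z)))
         + B (α y) (f (B x (f z))) = 0) ∧
     (∀ x y u : L, B (B (f x) (f y)) (α u) = 0)) := by
  constructor
  · rintro ⟨h1, h2, h3⟩
    constructor
    · intro x y z
      have h := h2 x y z
      simp only [hs] at h
      rw [hskew (f x) y]
      simp only [map_add, map_neg, LinearMap.add_apply, LinearMap.neg_apply]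
      linear_combination (norm := module) h
    · intro x y u
      have h := h3 u x y
      simp only [hs, hfα] at h
      have J := hjac u (f x) (f y)
      rw [hskew (f y) u] at J
      simp only [map_neg, LinearMap.neg_apply] at J
      linear_combination (norm := module) J - h
  · rintro ⟨hA, hC⟩
    refine ⟨?_, ?_, ?_⟩
    · intro x y; simp [hs, hα, hfα]
    · intro x y z
      simp only [hs]
      have h := hA x y z
      rw [hskew (f x) y] at h
      simp only [map_add, map_neg, LinearMap.add_apply, LinearMap.neg_apply] at h
      linear_combination (norm := module) h
    · intro x y z
      simp only [hs, hfα]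
      have J := hjac x (f y) (f z)
      rw [hskew (f z) x] at J
      simp only [map_neg, LinearMap.neg_apply] at J
      have h := hC y z x
      linear_combination (norm := module) J - h
end

section
/- Let (L, [−,−], α) be a Hom-Lie algebra and f linear with fα = αf. For the product x ⋆′ y = [x, f(y)], the identity (x ⋆′ y) ⋆′ α(z) = (x ⋆′ z) ⋆′ α(y) holds for all x,y,z if and only if [[f(y), f(z)], α(x)] = 0 for all x,y,z ∈ L. -/
theorem star_prime_novikov_identity_iff
    {K L : Type*} [Field K] [AddCommGroup L] [Module K L]
    (B : L →ₗ[K] L →ₗ[K] L)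
    (hskew : ∀ x y : L, B x y = - B y x)
    (α : L →ₗ[K] L) (hα : ∀ x y : L, α (B x y) = B (α x) (α y))
    (hjac : ∀ x y z : L, B (B x y) (α z) + B (B z x) (α y) + B (B y z) (α x) = 0)
    (f : L →ₗ[K] L) (hfα : ∀ x : L, f (α x) = α (f x)) :
    (∀ x y z : L, B (B x (f y)) (f (α z)) = B (B x (f z)) (f (α y))) ↔
    (∀ x y z : L, B (B (f y) (f z)) (α x) = 0) := by
  have key : ∀ x y z : L, B (B x (f y)) (f (α z)) - B (B x (f z)) (f (α y))
      + B (B (f y) (f z)) (α x) = 0 := by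
    intro x y z
    have j := hjac x (f y) (f z)
    have hs : B (B (f z) x) (α (f y)) = - B (B x (f z)) (α (f y)) := by
      rw [hskew (f z) x, map_neg, LinearMap.neg_apply]
    rw [hs] at j
    rw [hfα, hfα, sub_eq_add_neg]
    exact j
  constructor
  · intro h x y z
    have k := key x y z
    rw [h x y z] at k
    simpa using k
  · intro h x y z
    have k := key x y z
    rw [h x y z] at k
    simpa [sub_eq_zero] using k
end

section
/- Let (L, [−,−], α) be a Hom-Lie algebra and f linear with fα = αf. For the product x ⋆ y = [f(x), y], the left-Hom-symmetry identity (x⋆y)⋆α(z) − α(x)⋆(y⋆z) = (y⋆x)⋆α(z) − α(y)⋆(x⋆z) holds for all x,y,z if and only if [f([f(x),y]) + f([x,f(y)]) − [f(x),f(y)], α(z)] = 0 for all x,y,z ∈ L. -/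
theorem star_left_hom_symmetry_iff
    {K L : Type*} [Field K] [AddCommGroup L] [Module K L]
    (B : L →ₗ[K] L →ₗ[K] L)
    (hskew : ∀ x y : L, B x y = - B y x)
    (α : L →ₗ[K] L) (hα : ∀ x y : L, α (B x y) = B (α x) (α y))
    (hjac : ∀ x y z : L, B (B x y) (α z) + B (B z x) (α y) + B (B y z) (α x) = 0)
    (f : L →ₗ[K] L) (hfα : ∀ x : L, f (α x) = α (f x)) :
    (∀ x y z : L,
      B (f (B (f x) y)) (α z) - B (f (α x)) (B (f y) z) =
      B (f (B (f y) x)) (α z) - B (f (α y)) (B (f x) z)) ↔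
    (∀ x y z : L,
      B (f (B (f x) y) + f (B x (f y)) - B (f x) (f y)) (α z) = 0) := by
  have key : ∀ x y z : L,
      B (f (B (f x) y) + f (B x (f y)) - B (f x) (f y)) (α z) =
      (B (f (B (f x) y)) (α z) - B (f (α x)) (B (f y) z)) -
      (B (f (B (f y) x)) (α z) - B (f (α y)) (B (f x) z)) := by
    intro x y z
    have h1 : f (B (f y) x) = - f (B x (f y)) := by rw [hskew (f y) x, map_neg]
    have h2 := hjac (f x) (f y) z
    have h3 : B (f (α x)) (B (f y) z) = - B (B (f y) z) (α (f x)) := by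
      rw [hfα, hskew]
    have h4 : B (f (α y)) (B (f x) z) = - B (B (f x) z) (α (f y)) := by
      rw [hfα, hskew]
    have h5 : B (B (f x) z) (α (f y)) = - B (B z (f x)) (α (f y)) := by
      rw [hskew (f x) z, map_neg, LinearMap.neg_apply]
    simp only [map_add, map_sub, LinearMap.add_apply, LinearMap.sub_apply, h1, h3, h4, h5,
      map_neg, LinearMap.neg_apply]
    linear_combination (norm := abel) -h2
  constructor
  · intro h x y z
    rw [key, sub_eq_zero]
    exact h x y z
  · intro h x y z
    have := h x y z
    rw [key, sub_eq_zero] at this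
    exact this
end

section
/- Let (A, μ) be an associative commutative algebra and D: A → A a nilpotent derivation with Dⁿ = 0 for some n ≥ 2. Then the formal exponential E = exp(D) = Σ_{k=0}^{n−1} Dᵏ/k! is an algebra automorphism of A, and the product x * y = E(xD(y)) makes (A, *, E) a Hom-Novikov algebra. -/
open Finset in
theorem nilpotent_derivation_exp_hom_novikov
    {K A : Type*} [Field K] [CharZero K] [CommRing A] [Algebra K A]
    (D : A →ₗ[K] A) (hD : ∀ x y : A, D (x * y) = D x * y + x * D y)
    (n : ℕ) (hn : 2 ≤ n) (hDn : D ^ n = 0)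
    (E : A →ₗ[K] A)
    (hE : E = ∑ k ∈ Finset.range n, ((k.factorial : K)⁻¹) • (D ^ k))
    (s : A → A → A) (hs : ∀ x y : A, s x y = E (x * D y)) :
    (∀ x y : A, E (x * y) = E x * E y) ∧ Function.Bijective E ∧
    (∀ x y : A, E (s x y) = s (E x) (E y)) ∧
    (∀ x y z : A,
      s (s x y) (E z) - s (E x) (s y z) =
      s (s y x) (E z) - s (E y) (s x z)) ∧
    (∀ x y z : A, s (s x y) (E z) = s (s x z) (E y)) := by
  have hpow0 : ∀ m : ℕ, n ≤ m → (D ^ m : A →ₗ[K] A) = 0 := by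
    intro m hm
    rw [← Nat.sub_add_cancel hm, pow_add, hDn, mul_zero]
  have hDpow : ∀ (j : ℕ) (a : A), D ((D ^ j) a) = (D ^ (j + 1)) a := by
    intro j a
    rw [pow_succ', Module.End.mul_apply]
  -- iterated Leibniz rule
  have hLeib : ∀ (k : ℕ) (x y : A), (D ^ k) (x * y)
      = ∑ i ∈ range (k + 1), (k.choose i : K) • ((D ^ i) x * (D ^ (k - i)) y) := by
    intro k
    induction k with
    | zero => intro x y; simp
    | succ k ih =>
      intro x y
      have happ : (D ^ (k + 1)) (x * y) = D ((D ^ k) (x * y)) := by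
        rw [pow_succ', Module.End.mul_apply]
      set g : ℕ → A := fun j => (D ^ j) x * (D ^ (k + 1 - j)) y with hg
      have hterm : ∀ i ∈ range (k + 1),
          D ((k.choose i : K) • ((D ^ i) x * (D ^ (k - i)) y))
          = (k.choose i : K) • g (i + 1) + (k.choose i : K) • g i := by
        intro i hi
        rw [mem_range, Nat.lt_succ_iff] at hi
        have e1 : k + 1 - i = (k - i) + 1 := by omega
        have e2 : k + 1 - (i + 1) = k - i := by omega
        simp only [hg, e1, e2]
        rw [map_smul, hD, hDpow, hDpow, smul_add]
      rw [happ, ih, map_sum, Finset.sum_congr rfl hterm, Finset.sum_add_distrib]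
      have hR : ∑ i ∈ range (k + 2), ((k + 1).choose i : K) • g i
          = (∑ i ∈ range (k + 1), (k.choose i : K) • g (i + 1)
            + ∑ i ∈ range (k + 1), (k.choose (i + 1) : K) • g (i + 1)) + g 0 := by
        rw [Finset.sum_range_succ' (fun i => (((k + 1).choose i : K)) • g i) (k + 1)]
        simp only [Nat.choose_succ_succ, Nat.cast_add, add_smul, Nat.choose_zero_right,
          Nat.cast_one, one_smul, Finset.sum_add_distrib]
      have hL2 : ∑ i ∈ range (k + 1), (k.choose i : K) • g i
          = ∑ i ∈ range (k + 1), (k.choose (i + 1) : K) • g (i + 1) + g 0 := by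
        rw [Finset.sum_range_succ' (fun i => ((k.choose i : K)) • g i) k,
          Finset.sum_range_succ (fun i => ((k.choose (i + 1) : K)) • g (i + 1)) k]
        simp [Nat.choose_succ_self]
      rw [hR, hL2]
      abel
  have hfactne : ∀ k : ℕ, (k.factorial : K) ≠ 0 := fun k =>
    Nat.cast_ne_zero.mpr k.factorial_ne_zero
  have hcoef : ∀ (k i : ℕ), i ≤ k →
      ((k.factorial : K))⁻¹ * (k.choose i : K)
      = ((i.factorial : K))⁻¹ * (((k - i).factorial : K))⁻¹ := by
    intro k i hik
    have h := Nat.choose_mul_factorial_mul_factorial hik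
    have hK : (k.choose i : K) * (i.factorial : K) * ((k - i).factorial : K)
        = (k.factorial : K) := by exact_mod_cast congrArg (Nat.cast : ℕ → K) h
    field_simp [hfactne k, hfactne i, hfactne (k - i)]
    linear_combination hK
  -- multiplicativity
  have hmul : ∀ x y : A, E (x * y) = E x * E y := by
    intro x y
    set f : ℕ × ℕ → A := fun p =>
      (((p.1.factorial : K))⁻¹ * ((p.2.factorial : K))⁻¹) • ((D ^ p.1) x * (D ^ p.2) y) with hf
    have hf0 : ∀ p : ℕ × ℕ, n ≤ p.1 ∨ n ≤ p.2 → f p = 0 := by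
      intro p hp
      rcases hp with h | h
      · simp [hf, hpow0 p.1 h]
      · simp [hf, hpow0 p.2 h]
    have h2 : ∀ k : ℕ, ((k.factorial : K))⁻¹ • ((D ^ k) (x * y))
        = ∑ i ∈ range (k + 1), f (i, k - i) := by
      intro k
      rw [hLeib, Finset.smul_sum]
      refine Finset.sum_congr rfl fun i hi => ?_
      rw [mem_range, Nat.lt_succ_iff] at hi
      rw [smul_smul, hcoef k i hi]
    have h1 : E (x * y) = ∑ k ∈ range n, ((k.factorial : K))⁻¹ • ((D ^ k) (x * y)) := by
      rw [hE]
      simp only [LinearMap.sum_apply, LinearMap.smul_apply]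
    have h3 : E (x * y) = ∑ k ∈ range (2 * n), ∑ i ∈ range (k + 1), f (i, k - i) := by
      rw [h1, Finset.sum_congr rfl fun k _ => h2 k]
      refine Finset.sum_subset (Finset.range_subset_range.mpr (by omega)) ?_
      intro k _ hk
      rw [mem_range, not_lt] at hk
      rw [← h2 k, hpow0 k hk]
      simp
    have hdisj : (↑(range (2 * n)) : Set ℕ).PairwiseDisjoint Finset.HasAntidiagonal.antidiagonal := by
      intro a _ b _ hab
      simp only [Function.onFun, Finset.disjoint_left]
      intro p hpa hpb
      rw [Finset.HasAntidiagonal.mem_antidiagonal] at hpa hpb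
      exact hab (by omega)
    have hsub : (range (2 * n)).biUnion Finset.HasAntidiagonal.antidiagonal ⊆ range (2 * n) ×ˢ range (2 * n) := by
      intro p hp
      rw [Finset.mem_biUnion] at hp
      obtain ⟨k, hk, hpk⟩ := hp
      rw [mem_range] at hk
      rw [Finset.HasAntidiagonal.mem_antidiagonal] at hpk
      rw [Finset.mem_product, mem_range, mem_range]
      omega
    have h4 : ∑ k ∈ range (2 * n), ∑ i ∈ range (k + 1), f (i, k - i)
        = ∑ p ∈ range (2 * n) ×ˢ range (2 * n), f p := by
      rw [Finset.sum_congr rfl fun k _ =>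
        (Finset.Nat.sum_antidiagonal_eq_sum_range_succ_mk f k).symm,
        ← Finset.sum_biUnion hdisj]
      refine Finset.sum_subset hsub ?_
      intro p hp hnp
      apply hf0
      rw [Finset.mem_product, mem_range, mem_range] at hp
      by_contra hcon
      push_neg at hcon
      exact hnp (Finset.mem_biUnion.mpr
        ⟨p.1 + p.2, mem_range.mpr (by omega), Finset.HasAntidiagonal.mem_antidiagonal.mpr rfl⟩)
    have h5 : E x * E y = ∑ p ∈ range n ×ˢ range n, f p := by
      rw [hE]
      simp only [LinearMap.sum_apply, LinearMap.smul_apply]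
      rw [Finset.sum_mul_sum, Finset.sum_product]
      refine Finset.sum_congr rfl fun i _ => Finset.sum_congr rfl fun j _ => ?_
      rw [hf]
      rw [smul_mul_assoc, mul_smul_comm, smul_smul]
    have h6 : ∑ p ∈ range n ×ˢ range n, f p
        = ∑ p ∈ range (2 * n) ×ˢ range (2 * n), f p := by
      refine Finset.sum_subset
        (Finset.product_subset_product (Finset.range_subset_range.mpr (by omega))
          (Finset.range_subset_range.mpr (by omega))) ?_
      intro p _ hnp
      apply hf0
      simp only [Finset.mem_product, mem_range, not_and_or, not_lt] at hnp
      exact hnp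
    rw [h3, h4, h5, h6]
  -- bijectivity
  have hcommB : Commute D (∑ k ∈ range (n - 1), (((k + 1).factorial : K))⁻¹ • D ^ k) :=
    Commute.sum_right _ _ _ fun k _ => ((Commute.refl D).pow_right k).smul_right _
  have hE1 : E = 1 + D * (∑ k ∈ range (n - 1), (((k + 1).factorial : K))⁻¹ • D ^ k) := by
    rw [hE, Finset.mul_sum]
    have hn1 : n = (n - 1) + 1 := by omega
    rw [hn1, Finset.sum_range_succ' (fun k => ((k.factorial : K))⁻¹ • D ^ k) (n - 1)]
    have h0 : ((Nat.factorial 0 : K))⁻¹ • (D ^ 0 : A →ₗ[K] A) = 1 := by simp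
    rw [h0, add_comm]
    congr 1
    refine Finset.sum_congr rfl fun k _ => ?_
    rw [pow_succ', mul_smul_comm]
  have hunit : IsUnit E := by
    rw [hE1]
    exact IsNilpotent.isUnit_one_add ⟨n, by rw [hcommB.mul_pow, hDn, zero_mul]⟩
  have hbij : Function.Bijective E := (Module.End.isUnit_iff E).mp hunit
  -- E commutes with D
  have hDE : ∀ a : A, D (E a) = E (D a) := by
    intro a
    have hc : D * E = E * D := by
      rw [hE]
      exact Commute.sum_right _ _ _ fun k _ => ((Commute.refl D).pow_right k).smul_right _
    calc D (E a) = (D * E) a := rfl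
      _ = (E * D) a := by rw [hc]
      _ = E (D a) := rfl
  have hmult : ∀ x y : A, E (s x y) = s (E x) (E y) := by
    intro x y
    rw [hs, hs, hDE, ← hmul]
  have key1 : ∀ x y z : A, s (s x y) (E z) = E (E ((x * D y) * D z)) := by
    intro x y z
    rw [hs, hs, hDE, ← hmul]
  have key2 : ∀ x y z : A, s (E x) (s y z) = E (E (x * D (y * D z))) := by
    intro x y z
    rw [hs, hs, hDE, ← hmul]
  refine ⟨hmul, hbij, hmult, ?_, ?_⟩
  · intro x y z
    rw [key1, key2, key1, key2, ← map_sub, ← map_sub, ← map_sub, ← map_sub]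
    have harg : (x * D y) * D z - x * D (y * D z)
        = (y * D x) * D z - y * D (x * D z) := by
      rw [hD y (D z), hD x (D z)]
      ring
    rw [harg]
  · intro x y z
    rw [key1, key1]
    have harg : (x * D y) * D z = (x * D z) * D y := by ring
    rw [harg]
end

section
/- Let k[x] be the polynomial algebra in one variable over a field k of characteristic 0, D = d/dx, and α the algebra endomorphism determined by α(x) = x + c for a fixed c ∈ k. Then Dα = αD, and consequently the product f * g = α(f · D(g)) makes (k[x], *, α) a Hom-Novikov algebra. -/
open Polynomial in
theorem polynomial_shift_hom_novikov
    {k : Type*} [Field k] [CharZero k] (c : k)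
    (α : k[X] → k[X]) (hα : ∀ p : k[X], α p = Polynomial.aeval (X + C c) p)
    (s : k[X] → k[X] → k[X])
    (hs : ∀ f g : k[X], s f g = α (f * derivative g)) :
    (∀ p : k[X], derivative (α p) = α (derivative p)) ∧
    (∀ f g : k[X], α (s f g) = s (α f) (α g)) ∧
    (∀ f g h : k[X],
      s (s f g) (α h) - s (α f) (s g h) =
      s (s g f) (α h) - s (α g) (s f h)) ∧
    (∀ f g h : k[X], s (s f g) (α h) = s (s f h) (α g)) := by
  have hmul : ∀ f g : k[X], α (f * g) = α f * α g := by
    intro f g; simp [hα]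
  have hD : ∀ p : k[X], derivative (α p) = α (derivative p) := by
    intro p
    simp only [hα, ← comp_eq_aeval]
    rw [derivative_comp]
    simp
  refine ⟨hD, ?_, ?_, ?_⟩
  · intro f g
    rw [hs, hs, hmul, hD]
  · intro f g h
    simp only [hs, hD]
    simp only [hα, ← map_mul, ← map_sub]
    congr 1
    simp only [derivative_mul]
    ring
  · intro f g h
    simp only [hs, hD]
    simp only [hα, ← map_mul]
    congr 1
    ring
end

section
/- Let A be the 2-dimensional complex Novikov algebra (N5) with basis {e₁, e₂} and products e₁e₁ = 0, e₁e₂ = e₁, e₂e₁ = 0, e₂e₂ = e₁ + e₂. Then every nonzero algebra morphism α: A → A has matrix of the form α(e₁) = e₁, α(e₂) = b e₁ + e₂ for some b ∈ ℂ; in particular, every nonzero algebra endomorphism of A is invertible. -/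
/-- The 2-dimensional complex Novikov algebra (N5): e₁e₂ = e₁, e₂e₂ = e₁ + e₂,
other basis products zero, extended bilinearly. -/
def muN5 : (Fin 2 → ℂ) → (Fin 2 → ℂ) → (Fin 2 → ℂ) :=
  fun u v => ![u 0 * v 1 + u 1 * v 1, u 1 * v 1]

theorem N5_nonzero_morphisms
    (α : (Fin 2 → ℂ) →ₗ[ℂ] (Fin 2 → ℂ))
    (hα : ∀ u v, α (muN5 u v) = muN5 (α u) (α v))
    (hne : α ≠ 0) :
    (α ![1, 0] = ![1, 0] ∧ ∃ b : ℂ, α ![0, 1] = ![b, 1]) ∧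
    Function.Bijective α := by
  set a := α ![1, 0] 0 with ha
  set c := α ![1, 0] 1 with hc
  set b := α ![0, 1] 0 with hb
  set d := α ![0, 1] 1 with hd
  have hdecomp : ∀ v : Fin 2 → ℂ, v = v 0 • ![(1:ℂ), 0] + v 1 • ![(0:ℂ), 1] := by
    intro v; ext i; fin_cases i <;> simp
  have h11 := hα ![1, 0] ![1, 0]
  have h12 := hα ![1, 0] ![0, 1]
  have h22 := hα ![0, 1] ![0, 1]
  have hmu11 : muN5 ![(1:ℂ), 0] ![(1:ℂ), 0] = 0 := by
    ext i; fin_cases i <;> simp [muN5]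
  have hmu12 : muN5 ![(1:ℂ), 0] ![(0:ℂ), 1] = ![1, 0] := by
    ext i; fin_cases i <;> simp [muN5]
  have hmu22 : muN5 ![(0:ℂ), 1] ![(0:ℂ), 1] = ![(1:ℂ), 0] + ![(0:ℂ), 1] := by
    ext i; fin_cases i <;> simp [muN5]
  rw [hmu11, map_zero] at h11
  rw [hmu12] at h12
  rw [hmu22, map_add] at h22
  have e11_1 : (0:ℂ) = c * c := by
    have := congrFun h11 1; simpa [muN5, ← hc] using this
  have e12_0 : a = a * d + c * d := by
    have := congrFun h12 0; simpa [muN5, ← ha, ← hb, ← hc, ← hd] using this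
  have e22_0 : a + b = b * d + d * d := by
    have := congrFun h22 0; simpa [muN5, ← ha, ← hb, ← hc, ← hd] using this
  have e22_1 : c + d = d * d := by
    have := congrFun h22 1; simpa [muN5, ← ha, ← hb, ← hc, ← hd] using this
  have hc0 : c = 0 := mul_self_eq_zero.mp e11_1.symm
  have hd01 : d = 0 ∨ d = 1 := by
    have : d * (d - 1) = 0 := by rw [hc0] at e22_1; ring_nf; ring_nf at e22_1; linear_combination -e22_1
    rcases mul_eq_zero.mp this with h | h
    · exact Or.inl h
    · exact Or.inr (by linear_combination h)
  rcases hd01 with hd0 | hd1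
  · -- d = 0 forces α = 0, contradiction
    exfalso
    have ha0 : a = 0 := by rw [hd0, hc0] at e12_0; simpa using e12_0
    have hb0 : b = 0 := by rw [hd0, ha0] at e22_0; simpa using e22_0
    apply hne
    have hE1 : α ![1, 0] = 0 := by
      ext i; fin_cases i
      · simpa using ha0
      · simpa using hc0
    have hE2 : α ![0, 1] = 0 := by
      ext i; fin_cases i
      · simpa using hb0
      · simpa using hd0
    apply LinearMap.ext
    intro v
    conv_lhs => rw [hdecomp v]
    rw [map_add, map_smul, map_smul, hE1, hE2]
    simp
  · -- d = 1
    have ha1 : a = 1 := by rw [hd1] at e22_0; linear_combination e22_0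
    have hE1 : α ![1, 0] = ![1, 0] := by
      ext i; fin_cases i
      · simpa using ha1
      · simpa using hc0
    have hE2 : α ![0, 1] = ![b, 1] := by
      ext i; fin_cases i
      · simp [hb]
      · simpa using hd1
    have hαv : ∀ v : Fin 2 → ℂ, α v = ![v 0 + v 1 * b, v 1] := by
      intro v
      conv_lhs => rw [hdecomp v]
      rw [map_add, map_smul, map_smul, hE1, hE2]
      ext i; fin_cases i <;> simp <;> ring
    have hinj : Function.Injective α := by
      intro x y hxy
      rw [hαv x, hαv y] at hxy
      have h0 := congrFun hxy 0
      have h1 := congrFun hxy 1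
      simp at h0 h1
      ext i; fin_cases i
      · simpa using by linear_combination h0 - b * h1
      · simpa using h1
    exact ⟨⟨hE1, ⟨b, hE2⟩⟩, hinj, (LinearMap.injective_iff_surjective).mp hinj⟩
end
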